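/- arXiv:2010.08023 — 3 statements merged into one kernel-verified Lean document; each statement's English description precedes it below -/
import Mathlib

section
/- Let n ≥ 3 be a prime, q ≥ 2 an integer, and m = (q^n - 1)/(q - 1). If a prime r divides m, then either r ≡ 1 (mod 2n), or r = n and q ≡ 1 (mod n). -/
theorem prime_divisors_of_geometric
    (n q r : ℕ) (hn : n.Prime) (hn3 : 3 ≤ n) (hq : 2 ≤ q) (hr : r.Prime)
    (hdvd : r ∣ ∑ i ∈ Finset.range n, q ^ i) :
    r % (2 * n) = 1 ∨ (r = n ∧ q % n = 1) := by
  haveI : Fact r.Prime := ⟨hr⟩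
  have h0 : (∑ i ∈ Finset.range n, (q : ZMod r) ^ i) = 0 := by
    have := (ZMod.natCast_eq_zero_iff _ _).2 hdvd
    push_cast at this
    exact this
  have hpow : (q : ZMod r) ^ n = 1 := by
    have hg := geom_sum_mul (q : ZMod r) n
    rw [h0, zero_mul] at hg
    linear_combination -hg
  have hq0 : (q : ZMod r) ≠ 0 := by
    intro h
    rw [h, zero_pow (by omega : n ≠ 0)] at hpow
    exact zero_ne_one hpow
  have hd : orderOf (q : ZMod r) ∣ n := orderOf_dvd_of_pow_eq_one hpow
  rcases (Nat.Prime.eq_one_or_self_of_dvd hn _ hd) with h1 | hN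
  · -- order 1 : q ≡ 1 mod r
    have hq1 : (q : ZMod r) = 1 := orderOf_eq_one_iff.mp h1
    have hsum : (∑ i ∈ Finset.range n, (q : ZMod r) ^ i) = (n : ZMod r) := by
      simp [hq1]
    rw [hsum] at h0
    have hrn : r ∣ n := (ZMod.natCast_eq_zero_iff _ _).1 h0
    have hrn' : r = n := (Nat.prime_dvd_prime_iff_eq hr hn).1 hrn
    right
    refine ⟨hrn', ?_⟩
    subst hrn'
    have h1' : (q : ZMod r) = ((1 : ℕ) : ZMod r) := by simpa using hq1
    have hmod := (ZMod.natCast_eq_natCast_iff _ _ _).1 h1'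
    have h1n : 1 % r = 1 := Nat.mod_eq_of_lt (by omega)
    unfold Nat.ModEq at hmod
    omega
  · -- order n
    have hone : (q : ZMod r) ^ (r - 1) = 1 := ZMod.pow_card_sub_one_eq_one hq0
    have hndvd : n ∣ r - 1 := hN ▸ orderOf_dvd_of_pow_eq_one hone
    have hr2 : r ≠ 2 := by
      rintro rfl
      have := Nat.le_of_dvd one_pos hndvd
      omega
    have hodd : r % 2 = 1 := Nat.odd_iff.mp (hr.odd_of_ne_two hr2)
    have h2dvd : 2 ∣ r - 1 := by omega
    have hnodd : Odd n := hn.odd_of_ne_two (by omega)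
    have hcop : Nat.Coprime 2 n := Nat.coprime_two_left.mpr hnodd
    have h2n : 2 * n ∣ r - 1 := Nat.Coprime.mul_dvd_of_dvd_of_dvd hcop h2dvd hndvd
    obtain ⟨k, hk⟩ := h2n
    left
    have hr1 : r = 2 * n * k + 1 := by
      have := hr.two_le
      omega
    rw [hr1, Nat.mul_add_mod]
    exact Nat.mod_eq_of_lt (by omega)
end

section
/- Let p be a prime, e ≥ 2, and set q = p^e. If n > e then m = (q^n - 1)/(q - 1) is composite. Specifically, m equals the product (1 + p + ... + p^(n-1))(1 + p^n + ... + p^(n(e-1))) divided by (1 + p + ... + p^(e-1)), and each factor in the numerator exceeds the denominator. -/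
theorem geometric_composite_of_prime_power_base
    (p e n : ℕ) (hp : p.Prime) (he : 2 ≤ e) (hn : e < n) :
    ¬ (∑ i ∈ Finset.range n, (p ^ e) ^ i).Prime ∧
    (∑ i ∈ Finset.range n, (p ^ e) ^ i) * (∑ i ∈ Finset.range e, p ^ i) =
      (∑ i ∈ Finset.range n, p ^ i) * (∑ i ∈ Finset.range e, (p ^ n) ^ i) ∧
    (∑ i ∈ Finset.range e, p ^ i) < (∑ i ∈ Finset.range n, p ^ i) ∧
    (∑ i ∈ Finset.range e, p ^ i) < (∑ i ∈ Finset.range e, (p ^ n) ^ i) := by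
  have hp2 : 2 ≤ p := hp.two_le
  set A := ∑ i ∈ Finset.range n, (p ^ e) ^ i with hA
  set B := ∑ i ∈ Finset.range e, p ^ i with hB
  set C := ∑ i ∈ Finset.range n, p ^ i with hC
  set D := ∑ i ∈ Finset.range e, (p ^ n) ^ i with hD
  -- the key identity
  have hid : A * B = C * D := by
    have hpne : (p : ℤ) - 1 ≠ 0 := by
      have : (2 : ℤ) ≤ (p : ℤ) := by exact_mod_cast hp2
      omega
    have h : (A : ℤ) * B = (C : ℤ) * D := by
      apply mul_right_cancel₀ hpne
      have e1 : (∑ i ∈ Finset.range n, ((p:ℤ)^e)^i) * ((p:ℤ)^e - 1) = ((p:ℤ)^e)^n - 1 :=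
        geom_sum_mul _ n
      have e2 : (∑ i ∈ Finset.range e, (p:ℤ)^i) * ((p:ℤ) - 1) = (p:ℤ)^e - 1 :=
        geom_sum_mul _ e
      have e3 : (∑ i ∈ Finset.range n, (p:ℤ)^i) * ((p:ℤ) - 1) = (p:ℤ)^n - 1 :=
        geom_sum_mul _ n
      have e4 : (∑ i ∈ Finset.range e, ((p:ℤ)^n)^i) * ((p:ℤ)^n - 1) = ((p:ℤ)^n)^e - 1 :=
        geom_sum_mul _ e
      have hAi : (A : ℤ) = ∑ i ∈ Finset.range n, ((p:ℤ)^e)^i := by push_cast [hA]; simp [pow_mul]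
      have hBi : (B : ℤ) = ∑ i ∈ Finset.range e, (p:ℤ)^i := by push_cast [hB]; rfl
      have hCi : (C : ℤ) = ∑ i ∈ Finset.range n, (p:ℤ)^i := by push_cast [hC]; rfl
      have hDi : (D : ℤ) = ∑ i ∈ Finset.range e, ((p:ℤ)^n)^i := by push_cast [hD]; simp [pow_mul]
      calc (A : ℤ) * B * ((p:ℤ) - 1) = (A : ℤ) * ((p:ℤ)^e - 1) := by
            rw [hBi] at *; rw [mul_assoc, e2]
        _ = ((p:ℤ)^e)^n - 1 := by rw [hAi, e1]
        _ = ((p:ℤ)^n)^e - 1 := by ring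
        _ = (D : ℤ) * ((p:ℤ)^n - 1) := by rw [hDi, e4]
        _ = (D : ℤ) * ((C:ℤ) * ((p:ℤ) - 1)) := by rw [hCi, e3]
        _ = (C : ℤ) * D * ((p:ℤ) - 1) := by ring
    exact_mod_cast h
  -- inequalities
  have hBC : B < C := by
    apply Finset.sum_lt_sum_of_subset (Finset.range_subset_range.2 hn.le) (i := e)
    · exact Finset.mem_range.2 hn
    · simp
    · positivity
    · intro j _ _; positivity
  have hBD : B < D := by
    apply Finset.sum_lt_sum
    · intro i _
      rw [← pow_mul]
      exact Nat.pow_le_pow_right (le_of_lt hp.one_lt) (Nat.le_mul_of_pos_left i (by omega))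
    · refine ⟨1, Finset.mem_range.2 (by omega), ?_⟩
      simpa using Nat.pow_lt_pow_right hp.one_lt (show 1 < n by omega)
  have hBpos : 0 < B := by
    apply Finset.sum_pos
    · intro i _; positivity
    · exact ⟨0, Finset.mem_range.2 (by omega)⟩
  have hCpos : 0 < C := lt_trans hBpos hBC
  have hDpos : 0 < D := lt_trans hBpos hBD
  refine ⟨?_, hid, hBC, hBD⟩
  intro hprime
  have hdvd : A ∣ C * D := ⟨B, hid.symm ▸ rfl⟩
  rcases (Nat.Prime.dvd_mul hprime).1 hdvd with h | h
  · have hAC : A ≤ C := Nat.le_of_dvd hCpos h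
    have : C * D > A * B := by
      calc A * B ≤ C * B := Nat.mul_le_mul_right _ hAC
        _ < C * D := mul_lt_mul_of_pos_left hBD hCpos
    omega
  · have hAD : A ≤ D := Nat.le_of_dvd hDpos h
    have : C * D > A * B := by
      calc A * B ≤ D * B := Nat.mul_le_mul_right _ hAD
        _ < D * C := mul_lt_mul_of_pos_left hBC hDpos
        _ = C * D := Nat.mul_comm _ _
    omega
end

section
/- Let m be an odd number with m - 1 = (2l+1)·2^k, and let t be an integer coprime to m. Define a₀ = t^(2l+1) mod m and a_i = a_{i-1}² mod m for i = 1, ..., k. If m is prime, then either some a_i = 1 with a_{i-1} ≡ -1 (mod m) or a₀ ≡ 1 (mod m), and a_k = t^(m-1) ≡ 1 (mod m). -/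
lemma mr_aux {F : Type*} [Field F] (x : F) (n : ℕ) (h : x ^ 2 ^ n = 1) :
    x = 1 ∨ ∃ i, i < n ∧ x ^ 2 ^ i = -1 := by
  induction n with
  | zero => exact Or.inl (by simpa using h)
  | succ n ih =>
    have h2 : (x ^ 2 ^ n) * (x ^ 2 ^ n) = 1 := by
      rw [← pow_add, ← two_mul, ← pow_succ']; exact h
    rcases mul_self_eq_one_iff.mp h2 with h1 | h1
    · rcases ih h1 with h' | ⟨i, hi, hx⟩
      · exact Or.inl h'
      · exact Or.inr ⟨i, Nat.lt_succ_of_lt hi, hx⟩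
    · exact Or.inr ⟨n, Nat.lt_succ_self n, h1⟩

theorem miller_rabin_correctness
    (m l k t : ℕ) (hodd : Odd m) (hm : m.Prime)
    (hdecomp : m - 1 = (2 * l + 1) * 2 ^ k)
    (ht : Nat.Coprime t m) :
    (t ^ (2 * l + 1) % m = 1 ∨
      ∃ i, i < k ∧ t ^ ((2 * l + 1) * 2 ^ i) % m = m - 1) ∧
    t ^ (m - 1) % m = 1 := by
  haveI := Fact.mk hm
  have hm2 : 2 ≤ m := hm.two_le
  have hne : (t : ZMod m) ≠ 0 := by
    rw [Ne, ZMod.natCast_eq_zero_iff]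
    intro hdvd
    have : m ∣ 1 := ht ▸ Nat.dvd_gcd hdvd dvd_rfl
    have := Nat.le_of_dvd one_pos this
    omega
  have hflt : (t : ZMod m) ^ (m - 1) = 1 := ZMod.pow_card_sub_one_eq_one hne
  have hmod1 : ∀ e : ℕ, (t : ZMod m) ^ e = 1 → t ^ e % m = 1 := by
    intro e he
    have : ((t ^ e : ℕ) : ZMod m) = ((1 : ℕ) : ZMod m) := by push_cast; simpa using he
    have := (ZMod.natCast_eq_natCast_iff _ _ _).mp this
    have h3 := this.symm
    unfold Nat.ModEq at h3
    rw [Nat.mod_eq_of_lt (by omega : 1 < m)] at h3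
    omega
  have hmodneg : ∀ e : ℕ, (t : ZMod m) ^ e = -1 → t ^ e % m = m - 1 := by
    intro e he
    have hcast : ((m - 1 : ℕ) : ZMod m) = -1 := by
      have : ((m - 1 : ℕ) : ZMod m) = (m : ZMod m) - 1 := by
        push_cast [Nat.cast_sub (by omega : 1 ≤ m)]; ring
      rw [this, ZMod.natCast_self]; ring
    have : ((t ^ e : ℕ) : ZMod m) = ((m - 1 : ℕ) : ZMod m) := by
      push_cast; rw [he, hcast]
    have := (ZMod.natCast_eq_natCast_iff _ _ _).mp this
    have h3 := this.symm
    unfold Nat.ModEq at h3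
    rw [Nat.mod_eq_of_lt (by omega)] at h3
    omega
  constructor
  · have hx : ((t : ZMod m) ^ (2 * l + 1)) ^ 2 ^ k = 1 := by
      rw [← pow_mul, ← hdecomp]; exact hflt
    rcases mr_aux _ k hx with h1 | ⟨i, hi, hxi⟩
    · exact Or.inl (hmod1 _ h1)
    · exact Or.inr ⟨i, hi, hmodneg _ (by rw [pow_mul]; exact hxi)⟩
  · exact hmod1 _ hflt
end
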